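/- arXiv:1511.01209 — 6 statements merged into one kernel-verified Lean document; each statement's English description precedes it below -/
import Mathlib

section
/- Let K ≥ 4 and let f = [z1,z2,z3,z4] be a simple K-round quadrilateral in ℂ. Then each of the four edges of f has length at least diam(f)/(2K). -/
open Complex Set MeasureTheory Filter
open scoped Classical ENNReal

noncomputable section

/-- A quadrilateral face `[z1 z2 z3 z4]` given by its four vertices in `ℂ`. -/
structure Quad where
  z1 : ℂ
  z2 : ℂ
  z3 : ℂ
  z4 : ℂ

namespace Quad

/-- The set of the four vertices of the face. -/
def vertexSet (q : Quad) : Set ℂ := {q.z1, q.z2, q.z3, q.z4}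

/-- The four edges of the face, as segments. -/
def edges (q : Quad) : Set (Set ℂ) :=
  {segment ℝ q.z1 q.z2, segment ℝ q.z2 q.z3, segment ℝ q.z3 q.z4, segment ℝ q.z4 q.z1}

/-- The four vertices are pairwise distinct. -/
def Distinct (q : Quad) : Prop :=
  q.z1 ≠ q.z2 ∧ q.z1 ≠ q.z3 ∧ q.z1 ≠ q.z4 ∧ q.z2 ≠ q.z3 ∧ q.z2 ≠ q.z4 ∧ q.z3 ≠ q.z4

/-- The face is simple: vertices pairwise distinct, and two edges meet only when
consecutive, and then only at their shared endpoint. -/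
def Simple (q : Quad) : Prop :=
  q.Distinct ∧
  segment ℝ q.z1 q.z2 ∩ segment ℝ q.z2 q.z3 = {q.z2} ∧
  segment ℝ q.z2 q.z3 ∩ segment ℝ q.z3 q.z4 = {q.z3} ∧
  segment ℝ q.z3 q.z4 ∩ segment ℝ q.z4 q.z1 = {q.z4} ∧
  segment ℝ q.z4 q.z1 ∩ segment ℝ q.z1 q.z2 = {q.z1} ∧
  segment ℝ q.z1 q.z2 ∩ segment ℝ q.z3 q.z4 = ∅ ∧
  segment ℝ q.z2 q.z3 ∩ segment ℝ q.z4 q.z1 = ∅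

/-- The maximal distance between two of the four vertices. -/
def diam (q : Quad) : ℝ := Metric.diam q.vertexSet

/-- The lengths of the four edges. -/
def edgeLen (q : Quad) : Fin 4 → ℝ
  | 0 => dist q.z1 q.z2
  | 1 => dist q.z2 q.z3
  | 2 => dist q.z3 q.z4
  | 3 => dist q.z4 q.z1

/-- `K`-roundness: all four unsigned vertex angles are at least `2π/K`, and the ratio of
the lengths of any two edges is at most `K`. -/
def KRound (q : Quad) (K : ℝ) : Prop :=
  2 * Real.pi / K ≤ EuclideanGeometry.angle q.z4 q.z1 q.z2 ∧
  2 * Real.pi / K ≤ EuclideanGeometry.angle q.z1 q.z2 q.z3 ∧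
  2 * Real.pi / K ≤ EuclideanGeometry.angle q.z2 q.z3 q.z4 ∧
  2 * Real.pi / K ≤ EuclideanGeometry.angle q.z3 q.z4 q.z1 ∧
  ∀ i j : Fin 4, q.edgeLen i ≤ K * q.edgeLen j

/-- The diagonals of the face are orthogonal. -/
def Orthogonal (q : Quad) : Prop :=
  ((starRingEnd ℂ) (q.z3 - q.z1) * (q.z4 - q.z2)).re = 0

/-- The diagonal `[z1,z3]` is interior: its open segment is disjoint from the four edges. -/
def DiagInterior13 (q : Quad) : Prop :=
  ∀ e ∈ q.edges, openSegment ℝ q.z1 q.z3 ∩ e = ∅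

/-- The region of the face: the union of the two triangles obtained by cutting along an
interior diagonal. -/
def region (q : Quad) : Set ℂ :=
  if q.DiagInterior13 then
    convexHull ℝ {q.z1, q.z2, q.z3} ∪ convexHull ℝ {q.z1, q.z3, q.z4}
  else
    convexHull ℝ {q.z2, q.z3, q.z4} ∪ convexHull ℝ {q.z2, q.z4, q.z1}

/-- The area of the face: the Lebesgue measure of its region. -/
def area (q : Quad) : ℝ := (volume q.region).toReal

/-- `v` is the discrete gradient of `u` on the (orthogonal) face `q`:
`v ⊙ (z3 − z1) = u z3 − u z1` and `v ⊙ (z4 − z2) = u z4 − u z2`. -/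
def IsDiscreteGrad (q : Quad) (u : ℂ → ℝ) (v : ℂ) : Prop :=
  ((starRingEnd ℂ) v * (q.z3 - q.z1)).re = u q.z3 - u q.z1 ∧
  ((starRingEnd ℂ) v * (q.z4 - q.z2)).re = u q.z4 - u q.z2

/-- The contribution of the face `q` to the discrete Laplacian of `u` at a vertex `ζ`
(after cyclic relabeling so that the first vertex is `ζ`). -/
def lapTerm (q : Quad) (u : ℂ → ℝ) (ζ : ℂ) : ℝ :=
  if ζ = q.z1 then dist q.z2 q.z4 / dist q.z1 q.z3 * (u q.z3 - u q.z1)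
  else if ζ = q.z2 then dist q.z1 q.z3 / dist q.z2 q.z4 * (u q.z4 - u q.z2)
  else if ζ = q.z3 then dist q.z2 q.z4 / dist q.z1 q.z3 * (u q.z1 - u q.z3)
  else if ζ = q.z4 then dist q.z1 q.z3 / dist q.z2 q.z4 * (u q.z2 - u q.z4)
  else 0

end Quad

/-- A quadrilateral lattice: a finite nonempty collection of simple quadrilateral faces with
pairwise disjoint interiors, intersecting only in common vertices or common edges, each edge
on at most two faces, whose union is connected and simply connected. -/
structure QuadLattice where
  faces : Finset Quad
  faces_nonempty : faces.Nonempty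
  faces_simple : ∀ f ∈ faces, f.Simple
  interiors_disjoint : ∀ f ∈ faces, ∀ g ∈ faces, f ≠ g →
    interior f.region ∩ interior g.region = ∅
  region_inter : ∀ f ∈ faces, ∀ g ∈ faces, f ≠ g →
    f.region ∩ g.region = ∅ ∨
    (∃ v, v ∈ f.vertexSet ∧ v ∈ g.vertexSet ∧ f.region ∩ g.region = {v}) ∨
    (∃ e, e ∈ f.edges ∧ e ∈ g.edges ∧ f.region ∩ g.region = e)
  edge_le_two_faces : ∀ f ∈ faces, ∀ e ∈ f.edges,
    ({g : Quad | g ∈ faces ∧ e ∈ g.edges}).ncard ≤ 2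
  support_connected : IsConnected (⋃ f ∈ faces, f.region)
  support_simplyConnected : SimplyConnectedSpace (⋃ f ∈ faces, f.region)

namespace QuadLattice

/-- The union of the regions of all faces. -/
def support (Q : QuadLattice) : Set ℂ := ⋃ f ∈ Q.faces, f.region

/-- The set `Q*` of all vertices of the lattice. -/
def verts (Q : QuadLattice) : Set ℂ := ⋃ f ∈ Q.faces, f.vertexSet

/-- The boundary `∂Q`: the union of all edges belonging to exactly one face. -/
def boundary (Q : QuadLattice) : Set ℂ :=
  ⋃₀ {e | (∃ f ∈ Q.faces, e ∈ f.edges) ∧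
      ({g : Quad | g ∈ Q.faces ∧ e ∈ g.edges}).ncard = 1}

/-- `M(Q)`: the maximal edge length of the lattice. -/
def M (Q : QuadLattice) : ℝ :=
  sSup {r : ℝ | ∃ f ∈ Q.faces, ∃ i : Fin 4, r = f.edgeLen i}

/-- All faces of the lattice are `K`-round. -/
def KRound (Q : QuadLattice) (K : ℝ) : Prop := ∀ f ∈ Q.faces, f.KRound K

/-- All faces of the lattice have orthogonal diagonals. -/
def Orthogonal (Q : QuadLattice) : Prop := ∀ f ∈ Q.faces, f.Orthogonal

/-- `black` is a black/white two-coloring of the vertices: in every face the two diagonal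
pairs receive opposite colors. -/
def IsColoring (Q : QuadLattice) (black : ℂ → Prop) : Prop :=
  ∀ f ∈ Q.faces, (black f.z1 ↔ black f.z3) ∧ (black f.z2 ↔ black f.z4) ∧
    (black f.z1 ↔ ¬ black f.z2)

/-- The discrete Laplacian of `u` at the point `ζ`. -/
def lap (Q : QuadLattice) (u : ℂ → ℝ) (ζ : ℂ) : ℝ :=
  ∑ f ∈ Q.faces, f.lapTerm u ζ

/-- `u` is discrete harmonic: its discrete Laplacian vanishes at every interior vertex. -/
def DiscreteHarmonic (Q : QuadLattice) (u : ℂ → ℝ) : Prop :=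
  ∀ ζ ∈ Q.verts, ζ ∉ Q.boundary → Q.lap u ζ = 0

/-- The maximum of `|u z' − u w'|` over pairs of vertices of `Q` lying on `∂Q` within
distance `r` of `c` (zero if there are no such vertices). -/
def bdryOsc (Q : QuadLattice) (u : ℂ → ℝ) (c : ℂ) (r : ℝ) : ℝ :=
  sSup (insert 0 {d : ℝ | ∃ z' ∈ Q.verts ∩ Q.boundary, ∃ w' ∈ Q.verts ∩ Q.boundary,
    dist z' c ≤ r ∧ dist w' c ≤ r ∧ d = |u z' - u w'|})

end QuadLattice

/-- A sequence of quadrilateral lattices approximates a bounded domain `Ω` if the maximal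
edge lengths tend to `0` and the Hausdorff distance between `∂Qₙ` and `∂Ω` tends to `0`. -/
def Approximates (Q : ℕ → QuadLattice) (Ω : Set ℂ) : Prop :=
  Tendsto (fun n => (Q n).M) atTop (nhds 0) ∧
  Tendsto (fun n => Metric.hausdorffDist ((Q n).boundary) (frontier Ω)) atTop (nhds 0)

/-- The signed (shoelace) area of the quadrilateral `abcd`. -/
def signedArea (a b c d : ℂ) : ℝ :=
  (1 / 2) * ((starRingEnd ℂ) a * b + (starRingEnd ℂ) b * c +
    (starRingEnd ℂ) c * d + (starRingEnd ℂ) d * a).im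

/-- The continuous Laplacian `Δg = D²g(1,1) + D²g(i,i)` of `g : ℂ → ℝ`. -/
def lapCont (g : ℂ → ℝ) (z : ℂ) : ℝ :=
  iteratedFDeriv ℝ 2 g z ![1, 1] + iteratedFDeriv ℝ 2 g z ![Complex.I, Complex.I]

/-- The closed axis-parallel square `[a, a+r] × [b, b+r]` in `ℂ`. -/
def sqSet (a b r : ℝ) : Set ℂ :=
  {z : ℂ | z.re ∈ Set.Icc a (a + r) ∧ z.im ∈ Set.Icc b (b + r)}

end
/-- Every edge of a simple `K`-round quadrilateral has length at least
`diam(f)/(2K)`. -/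
theorem edge_length_lower_bound (K : ℝ) (hK : 4 ≤ K) (q : Quad)
    (hs : q.Simple) (hr : q.KRound K) :
    ∀ i : Fin 4, q.diam / (2 * K) ≤ q.edgeLen i := by
  intro i
  have hK0 : (0:ℝ) < K := by linarith
  set L := q.edgeLen i with hL
  have hL0 : 0 ≤ L := by
    fin_cases i <;> simp [hL, Quad.edgeLen] <;> exact dist_nonneg
  have hedge : ∀ j : Fin 4, q.edgeLen j ≤ K * L := fun j => hr.2.2.2.2 j i
  have h01 : dist q.z1 q.z2 ≤ K * L := hedge 0
  have h12 : dist q.z2 q.z3 ≤ K * L := hedge 1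
  have h23 : dist q.z3 q.z4 ≤ K * L := hedge 2
  have h30 : dist q.z4 q.z1 ≤ K * L := hedge 3
  have hdiam : q.diam ≤ 2 * K * L := by
    apply Metric.diam_le_of_forall_dist_le (by positivity)
    intro x hx y hy
    have hxm : x = q.z1 ∨ x = q.z2 ∨ x = q.z3 ∨ x = q.z4 := by
      simpa [Quad.vertexSet] using hx
    have hym : y = q.z1 ∨ y = q.z2 ∨ y = q.z3 ∨ y = q.z4 := by
      simpa [Quad.vertexSet] using hy
    have h13 : dist q.z1 q.z3 ≤ 2 * K * L := by
      calc dist q.z1 q.z3 ≤ dist q.z1 q.z2 + dist q.z2 q.z3 := dist_triangle _ _ _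
        _ ≤ 2 * K * L := by linarith
    have h24 : dist q.z2 q.z4 ≤ 2 * K * L := by
      calc dist q.z2 q.z4 ≤ dist q.z2 q.z3 + dist q.z3 q.z4 := dist_triangle _ _ _
        _ ≤ 2 * K * L := by linarith
    have hKL2 : K * L ≤ 2 * K * L := by nlinarith
    rcases hxm with rfl | rfl | rfl | rfl <;> rcases hym with rfl | rfl | rfl | rfl <;>
      simp_all [dist_comm] <;> linarith
  rw [div_le_iff₀ (by positivity)]
  linarith
end

section
/- Let K ≥ 4 and let f = [z1,z2,z3,z4] be a simple K-round quadrilateral in ℂ. Then each of the two diagonals of f has length at least diam(f)/(4K²). -/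
open Complex Set MeasureTheory Filter
open scoped Classical ENNReal

/-- Key triangle lemma: if the angle at `b` is at least `2π/K`, then the opposite side is
at least `2/K` times the side `ab`. -/
lemma diag_ge_aux (K : ℝ) (hK : 4 ≤ K) (a b c : ℂ)
    (hθ : 2 * Real.pi / K ≤ EuclideanGeometry.angle a b c) :
    2 / K * dist a b ≤ dist a c := by
  have hKpos : (0:ℝ) < K := by linarith
  have hπ := Real.pi_pos
  have hθπ : EuclideanGeometry.angle a b c ≤ Real.pi := EuclideanGeometry.angle_le_pi a b c
  have hθ0 : (0:ℝ) < 2 * Real.pi / K := by positivity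
  have hcos : Real.cos (EuclideanGeometry.angle a b c) ≤ 1 - 8 / K ^ 2 := by
    have h1 : Real.cos (EuclideanGeometry.angle a b c)
        ≤ 1 - 2 / Real.pi ^ 2 * (EuclideanGeometry.angle a b c) ^ 2 :=
      Real.cos_le_one_sub_mul_cos_sq (abs_le.mpr ⟨by linarith, hθπ⟩)
    have h2 : (2 * Real.pi / K) ^ 2 ≤ (EuclideanGeometry.angle a b c) ^ 2 :=
      pow_le_pow_left₀ hθ0.le hθ 2
    have h4 : 2 / Real.pi ^ 2 * (2 * Real.pi / K) ^ 2
        ≤ 2 / Real.pi ^ 2 * (EuclideanGeometry.angle a b c) ^ 2 :=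
      mul_le_mul_of_nonneg_left h2 (by positivity)
    have h3 : 2 / Real.pi ^ 2 * (2 * Real.pi / K) ^ 2 = 8 / K ^ 2 := by
      field_simp; ring
    linarith
  have hlaw := EuclideanGeometry.law_cos a b c
  have hab : (0:ℝ) ≤ dist a b := dist_nonneg
  have hcb : (0:ℝ) ≤ dist c b := dist_nonneg
  have hac : (0:ℝ) ≤ dist a c := dist_nonneg
  have hsq : (2 / K * dist a b) ^ 2 ≤ dist a c ^ 2 := by
    have hmul : 2 * dist a b * dist c b * Real.cos (EuclideanGeometry.angle a b c)
        ≤ 2 * dist a b * dist c b * (1 - 8 / K ^ 2) :=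
      mul_le_mul_of_nonneg_left hcos (by positivity)
    have hKK : (0:ℝ) < K ^ 2 := by positivity
    have hK16 : (16:ℝ) ≤ K ^ 2 := by nlinarith
    have e1 : (2 / K * dist a b) ^ 2 * K ^ 2 = 4 * dist a b ^ 2 := by
      field_simp; ring
    have e2 : (dist a b * dist a b + dist c b * dist c b -
            2 * dist a b * dist c b * (1 - 8 / K ^ 2)) * K ^ 2
        = K ^ 2 * (dist a b - dist c b) ^ 2 + 16 * (dist a b * dist c b) := by
      field_simp; ring
    have key : (2 / K * dist a b) ^ 2 * K ^ 2 ≤ dist a c ^ 2 * K ^ 2 := by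
      rw [e1]
      have e4 : dist a c ^ 2 * K ^ 2 ≥ (dist a b * dist a b + dist c b * dist c b -
            2 * dist a b * dist c b * (1 - 8 / K ^ 2)) * K ^ 2 := by nlinarith
      rw [e2] at e4
      nlinarith [sq_nonneg (dist a b - dist c b), sq_nonneg (dist a b - 2 * dist c b),
        mul_le_mul_of_nonneg_right hK16 (sq_nonneg (dist a b - dist c b))]
    exact le_of_mul_le_mul_right key hKK
  exact le_of_pow_le_pow_left₀ (by norm_num) hac hsq

/-- The diameter of the vertex set is at most `2K` times any edge length. -/
lemma diam_le_aux (K : ℝ) (hK : 4 ≤ K) (q : Quad) (hr : q.KRound K) (j : Fin 4) :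
    q.diam ≤ 2 * K * q.edgeLen j := by
  obtain ⟨_, _, _, _, hratio⟩ := hr
  have hKpos : (0:ℝ) < K := by linarith
  have hj : (0:ℝ) ≤ q.edgeLen j := by
    fin_cases j <;> exact dist_nonneg
  have ha0 : dist q.z1 q.z2 ≤ K * q.edgeLen j := hratio 0 j
  have ha1 : dist q.z2 q.z3 ≤ K * q.edgeLen j := hratio 1 j
  have ha2 : dist q.z3 q.z4 ≤ K * q.edgeLen j := hratio 2 j
  have ha3 : dist q.z4 q.z1 ≤ K * q.edgeLen j := hratio 3 j
  have h13 : dist q.z1 q.z3 ≤ 2 * K * q.edgeLen j :=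
    (dist_triangle q.z1 q.z2 q.z3).trans (by linarith)
  have h24 : dist q.z2 q.z4 ≤ 2 * K * q.edgeLen j :=
    (dist_triangle q.z2 q.z3 q.z4).trans (by linarith)
  have h0 : dist q.z1 q.z2 ≤ 2 * K * q.edgeLen j := by nlinarith [dist_nonneg (x := q.z1) (y := q.z2)]
  have h1 : dist q.z2 q.z3 ≤ 2 * K * q.edgeLen j := by nlinarith [dist_nonneg (x := q.z2) (y := q.z3)]
  have h2 : dist q.z3 q.z4 ≤ 2 * K * q.edgeLen j := by nlinarith [dist_nonneg (x := q.z3) (y := q.z4)]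
  have h3 : dist q.z4 q.z1 ≤ 2 * K * q.edgeLen j := by nlinarith [dist_nonneg (x := q.z4) (y := q.z1)]
  apply Metric.diam_le_of_forall_dist_le (by positivity)
  intro x hx y hy
  simp only [Quad.vertexSet, Set.mem_insert_iff, Set.mem_singleton_iff] at hx hy
  rcases hx with rfl | rfl | rfl | rfl <;> rcases hy with rfl | rfl | rfl | rfl <;>
    first
      | (rw [dist_self]; positivity)
      | exact h0
      | exact h1
      | exact h2
      | exact h3
      | exact h13
      | exact h24
      | (rw [dist_comm]
         first
           | exact h0
           | exact h1
           | exact h2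
           | exact h3
           | exact h13
           | exact h24)

/-- Each diagonal of a simple `K`-round quadrilateral has length at least
`diam(f)/(4K²)`. -/
theorem diagonal_length_lower_bound (K : ℝ) (hK : 4 ≤ K) (q : Quad)
    (hs : q.Simple) (hr : q.KRound K) :
    q.diam / (4 * K ^ 2) ≤ dist q.z1 q.z3 ∧ q.diam / (4 * K ^ 2) ≤ dist q.z2 q.z4 := by
  obtain ⟨ha1, ha2, ha3, ha4, hratio⟩ := hr
  have hKpos : (0:ℝ) < K := by linarith
  have hd13 : 2 / K * dist q.z1 q.z2 ≤ dist q.z1 q.z3 := diag_ge_aux K hK _ _ _ ha2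
  have hd24 : 2 / K * dist q.z2 q.z3 ≤ dist q.z2 q.z4 := diag_ge_aux K hK _ _ _ ha3
  have hD0 : q.diam ≤ 2 * K * q.edgeLen 0 := diam_le_aux K hK q ⟨ha1, ha2, ha3, ha4, hratio⟩ 0
  have hD1 : q.diam ≤ 2 * K * q.edgeLen 1 := diam_le_aux K hK q ⟨ha1, ha2, ha3, ha4, hratio⟩ 1
  have hE0 : q.edgeLen 0 = dist q.z1 q.z2 := rfl
  have hE1 : q.edgeLen 1 = dist q.z2 q.z3 := rfl
  rw [hE0] at hD0; rw [hE1] at hD1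
  constructor
  · rw [div_le_iff₀ (by positivity)]
    have h12 : (0:ℝ) ≤ dist q.z1 q.z2 := dist_nonneg
    have h13 : (0:ℝ) ≤ dist q.z1 q.z3 := dist_nonneg
    have hm : K * (2 / K * dist q.z1 q.z2) ≤ K * dist q.z1 q.z3 :=
      mul_le_mul_of_nonneg_left hd13 hKpos.le
    have he : K * (2 / K * dist q.z1 q.z2) = 2 * dist q.z1 q.z2 := by field_simp
    rw [he] at hm
    nlinarith
  · rw [div_le_iff₀ (by positivity)]
    have h23 : (0:ℝ) ≤ dist q.z2 q.z3 := dist_nonneg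
    have h24 : (0:ℝ) ≤ dist q.z2 q.z4 := dist_nonneg
    have hm : K * (2 / K * dist q.z2 q.z3) ≤ K * dist q.z2 q.z4 :=
      mul_le_mul_of_nonneg_left hd24 hKpos.le
    have he : K * (2 / K * dist q.z2 q.z3) = 2 * dist q.z2 q.z3 := by field_simp
    rw [he] at hm
    nlinarith
end

section
/- Let z1,z2,z3,z4 ∈ ℂ with z1 ≠ z3, z2 ≠ z4 and orthogonal diagonals, i.e. Re[conj(z3−z1)·(z4−z2)] = 0. Suppose p ∈ ℂ satisfies either the pair of equations Re[conj(z1−z3)·(p−(z1+z3)/2)] = 0 and Re[conj(z2−z4)·(p−(z2+z4)/2)] = 0, or the pair of equations Re[(z1−z3)·(p−(z1+z3)/2)] = 0 and Re[(z2−z4)·(p−(z2+z4)/2)] = 0. Then |p − (z1+z2+z3+z4)/4| = |z2+z4−z1−z3|/4; that is, p lies on the circle whose diameter has endpoints (z1+z3)/2 and (z2+z4)/2. -/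
open Complex Set MeasureTheory Filter
open scoped Classical ENNReal

lemma aux_perp (u1 u2 v1 v2 x1 x2 y1 y2 : ℝ) (hu : u1^2 + u2^2 ≠ 0) (hv : v1^2 + v2^2 ≠ 0)
    (h0 : u1*v1 + u2*v2 = 0) (h1 : u1*x1 + u2*x2 = 0) (h2 : v1*y1 + v2*y2 = 0) :
    x1*y1 + x2*y2 = 0 := by
  have hcross : y1*u2 - y2*u1 = 0 := by
    have h : (y1*u2 - y2*u1)*(v1^2+v2^2) =
        (v1*y1 + v2*y2)*(v1*u2 - v2*u1) + (y1*v2 - y2*v1)*(u1*v1 + u2*v2) := by ring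
    rw [h2, h0, mul_zero, zero_mul, add_zero] at h
    exact (mul_eq_zero.mp h).resolve_right hv
  have h : (x1*y1 + x2*y2)*(u1^2+u2^2) =
      (u1*x1 + u2*x2)*(u1*y1 + u2*y2) + (x1*u2 - x2*u1)*(y1*u2 - y2*u1) := by ring
  rw [h1, hcross, zero_mul, mul_zero, add_zero] at h
  exact (mul_eq_zero.mp h).resolve_right hu

/-- For a quadrilateral with orthogonal diagonals, the intersection point of
the two perpendicular bisectors of the diagonals (or of the two "conjugate" lines) lies on the
circle whose diameter has endpoints `(z1+z3)/2` and `(z2+z4)/2`. -/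
theorem bisector_intersection_on_circle (z1 z2 z3 z4 p : ℂ)
    (h13 : z1 ≠ z3) (h24 : z2 ≠ z4)
    (horth : ((starRingEnd ℂ) (z3 - z1) * (z4 - z2)).re = 0)
    (hp : (((starRingEnd ℂ) (z1 - z3) * (p - (z1 + z3) / 2)).re = 0 ∧
           ((starRingEnd ℂ) (z2 - z4) * (p - (z2 + z4) / 2)).re = 0) ∨
          (((z1 - z3) * (p - (z1 + z3) / 2)).re = 0 ∧
           ((z2 - z4) * (p - (z2 + z4) / 2)).re = 0)) :
    ‖p - (z1 + z2 + z3 + z4) / 4‖ = ‖z2 + z4 - z1 - z3‖ / 4 := by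
  have hu : (z1.re - z3.re)^2 + (z1.im - z3.im)^2 ≠ 0 := by
    intro h
    apply h13
    apply Complex.ext <;> nlinarith [sq_nonneg (z1.re - z3.re), sq_nonneg (z1.im - z3.im)]
  have hv : (z2.re - z4.re)^2 + (z2.im - z4.im)^2 ≠ 0 := by
    intro h
    apply h24
    apply Complex.ext <;> nlinarith [sq_nonneg (z2.re - z4.re), sq_nonneg (z2.im - z4.im)]
  have h0 : (z1.re - z3.re)*(z2.re - z4.re) + (z1.im - z3.im)*(z2.im - z4.im) = 0 := by
    simp only [Complex.mul_re, Complex.sub_re, Complex.sub_im, Complex.conj_re,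
      Complex.conj_im] at horth
    linarith
  have key : (p.re - (z1.re + z3.re)/2)*(p.re - (z2.re + z4.re)/2)
      + (p.im - (z1.im + z3.im)/2)*(p.im - (z2.im + z4.im)/2) = 0 := by
    rcases hp with ⟨h1, h2⟩ | ⟨h1, h2⟩ <;>
      simp only [Complex.mul_re, Complex.sub_re, Complex.sub_im, Complex.add_re,
        Complex.add_im, Complex.conj_re, Complex.conj_im, Complex.div_re, Complex.div_im,
        Complex.normSq_apply, Complex.re_ofNat, Complex.im_ofNat] at h1 h2
    · norm_num at h1 h2
      exact aux_perp (z1.re - z3.re) (z1.im - z3.im) (z2.re - z4.re) (z2.im - z4.im)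
        _ _ _ _ hu hv h0 (by linarith) (by linarith)
    · norm_num at h1 h2
      have hu' : (z1.re - z3.re)^2 + (-(z1.im - z3.im))^2 ≠ 0 := by
        intro h; exact hu (by nlinarith)
      have hv' : (z2.re - z4.re)^2 + (-(z2.im - z4.im))^2 ≠ 0 := by
        intro h; exact hv (by nlinarith)
      exact aux_perp (z1.re - z3.re) (-(z1.im - z3.im)) (z2.re - z4.re) (-(z2.im - z4.im))
        _ _ _ _ hu' hv' (by linarith) (by linarith) (by linarith)
  rw [show ‖z2 + z4 - z1 - z3‖ / 4 = ‖(z2 + z4 - z1 - z3)/4‖ by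
    rw [norm_div]; norm_num]
  rw [Complex.norm_def, Complex.norm_def]
  congr 1
  simp only [Complex.normSq_apply, Complex.sub_re, Complex.sub_im, Complex.add_re,
    Complex.add_im, Complex.div_re, Complex.div_im, Complex.normSq_apply,
    Complex.re_ofNat, Complex.im_ofNat]
  norm_num
  linear_combination key
end

section
/- For every K ≥ 4 there exists a constant C_K > 0, depending only on K, such that the following holds. Let f = [z1,z2,z3,z4] be a simple K-round quadrilateral in ℂ with orthogonal diagonals (Re[conj(z3−z1)·(z4−z2)] = 0) whose diagonal [z1,z3] is interior, and let p ∈ ℂ satisfy Re[(z1−z3)·(p−(z1+z3)/2)] = 0 and Re[(z2−z4)·(p−(z2+z4)/2)] = 0. Then |Im[(2p−z2−z4)·(z4−z2)]| ≤ C_K · area(f). -/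
open Complex Set MeasureTheory Filter
open scoped Classical ENNReal

section AuxLemmas

lemma vol_unit_tri : ENNReal.ofReal (1/4) ≤ volume (convexHull ℝ ({0, 1, Complex.I} : Set ℂ)) := by
  have hsub : {z : ℂ | z.re ∈ Set.Icc (0:ℝ) 2⁻¹ ∧ z.im ∈ Set.Icc (0:ℝ) 2⁻¹}
      ⊆ convexHull ℝ ({0, 1, Complex.I} : Set ℂ) := by
    rintro z ⟨⟨h1, h2⟩, h3, h4⟩
    have := (Finset.univ : Finset (Fin 3)).centerMass_mem_convexHull
      (w := ![1 - z.re - z.im, z.re, z.im]) (z := ![0, 1, Complex.I])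
      (s := ({0, 1, Complex.I} : Set ℂ))
      (by intro i _; fin_cases i <;> simp <;> linarith)
      (by simp [Fin.sum_univ_three]; linarith)
      (by intro i _; fin_cases i <;> simp)
    convert this using 1
    simp only [Finset.centerMass, Fin.sum_univ_three]
    apply Complex.ext <;> simp <;> ring_nf <;> simp [Complex.ext_iff] <;> ring
  calc ENNReal.ofReal (1/4)
      = volume {z : ℂ | z.re ∈ Set.Icc (0:ℝ) 2⁻¹ ∧ z.im ∈ Set.Icc (0:ℝ) 2⁻¹} := by
        have : {z : ℂ | z.re ∈ Set.Icc (0:ℝ) 2⁻¹ ∧ z.im ∈ Set.Icc (0:ℝ) 2⁻¹}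
            = Complex.measurableEquivRealProd ⁻¹' (Set.Icc (0:ℝ) 2⁻¹ ×ˢ Set.Icc (0:ℝ) 2⁻¹) := by
          ext z; rfl
        rw [this, Complex.volume_preserving_equiv_real_prod.measure_preimage
          (measurableSet_Icc.prod measurableSet_Icc).nullMeasurableSet]
        rw [Measure.volume_eq_prod, Measure.prod_prod, Real.volume_Icc,
          ← ENNReal.ofReal_mul (by norm_num)]
        norm_num
    _ ≤ _ := measure_mono hsub

lemma tri_vol (a b c : ℂ) :
    ENNReal.ofReal (|((starRingEnd ℂ) (b - a) * (c - a)).im| / 4)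
      ≤ volume (convexHull ℝ ({a, b, c} : Set ℂ)) := by
  set u := b - a with hu
  set v := c - a with hv
  set L : ℂ →ₗ[ℝ] ℂ :=
    (LinearMap.toSpanSingleton ℝ ℂ u).comp Complex.reLm
      + (LinearMap.toSpanSingleton ℝ ℂ v).comp Complex.imLm with hL
  have hL1 : L 1 = u := by simp [hL, LinearMap.toSpanSingleton]
  have hLI : L Complex.I = v := by simp [hL, LinearMap.toSpanSingleton]
  have hdet : |L.det| = |((starRingEnd ℂ) u * v).im| := by
    rw [← LinearMap.det_toMatrix Complex.basisOneI]
    rw [Matrix.det_fin_two]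
    simp [LinearMap.toMatrix_apply, Complex.coe_basisOneI, hL, LinearMap.toSpanSingleton,
      Complex.mul_im]
    ring_nf
  have himg : (fun z => a + z) '' (L '' (convexHull ℝ ({0, 1, Complex.I} : Set ℂ)))
      = convexHull ℝ ({a, b, c} : Set ℂ) := by
    rw [L.image_convexHull]
    have := (AffineEquiv.constVAdd ℝ ℂ a).toAffineMap.image_convexHull
      (⇑L '' ({0, 1, Complex.I} : Set ℂ))
    have heq : ⇑(AffineEquiv.constVAdd ℝ ℂ a).toAffineMap = fun z : ℂ => a + z := by
      ext z; rfl
    rw [heq] at this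
    rw [this]
    congr 1
    have e1 : a + u = b := by rw [hu]; ring
    have e2 : a + v = c := by rw [hv]; ring
    simp [Set.image_insert_eq, Set.image_image, hL1, hLI, e1, e2]
  have hvol : volume (convexHull ℝ ({a, b, c} : Set ℂ))
      = ENNReal.ofReal |L.det| * volume (convexHull ℝ ({0, 1, Complex.I} : Set ℂ)) := by
    rw [← himg]
    rw [show (fun z : ℂ => a + z) '' (L '' (convexHull ℝ ({0, 1, Complex.I} : Set ℂ)))
        = (fun z : ℂ => -a + z) ⁻¹' (L '' (convexHull ℝ ({0, 1, Complex.I} : Set ℂ))) from ?_]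
    · rw [measure_preimage_add]
      exact Measure.addHaar_image_linearMap volume L _
    · ext z; simp
  rw [hvol, hdet]
  calc ENNReal.ofReal (|((starRingEnd ℂ) u * v).im| / 4)
      = ENNReal.ofReal |((starRingEnd ℂ) u * v).im| * ENNReal.ofReal (1/4) := by
        rw [← ENNReal.ofReal_mul (abs_nonneg _)]; ring_nf
    _ ≤ _ := mul_le_mul_right vol_unit_tri _

lemma perp_im_zero {d1 d2 z : ℂ} (hd : d1 ≠ 0) (h1 : (d1 * z).re = 0)
    (ho : ((starRingEnd ℂ) d1 * d2).re = 0) : (d2 * z).im = 0 := by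
  have hne : d1.re ^ 2 + d1.im ^ 2 ≠ 0 := by
    have := Complex.normSq_pos.mpr hd
    simp [Complex.normSq_apply] at this
    nlinarith
  simp [Complex.mul_re, Complex.mul_im] at *
  have h2 : (d1.re ^ 2 + d1.im ^ 2) * (d2.re * z.im + d2.im * z.re) = 0 := by
    linear_combination (d1.re * d2.im - d1.im * d2.re) * h1
      + (d1.re * z.im + d1.im * z.re) * ho
  have := mul_eq_zero.mp h2
  tauto

end AuxLemmas

/-- For every `K ≥ 4` there is `C_K > 0` such that for any simple `K`-round
orthogonal quadrilateral with interior diagonal `[z1,z3]`, and `z''` the intersection of the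
two conjugate bisector lines, `|Im[(2z''−z2−z4)(z4−z2)]| ≤ C_K · area(f)`. -/
theorem im_bisector_bound (K : ℝ) (hK : 4 ≤ K) :
    ∃ C : ℝ, 0 < C ∧ ∀ (q : Quad) (p : ℂ), q.Simple → q.KRound K → q.Orthogonal →
      q.DiagInterior13 →
      ((q.z1 - q.z3) * (p - (q.z1 + q.z3) / 2)).re = 0 →
      ((q.z2 - q.z4) * (p - (q.z2 + q.z4) / 2)).re = 0 →
      |((2 * p - q.z2 - q.z4) * (q.z4 - q.z2)).im| ≤ C * q.area := by
  have hπ := Real.pi_pos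
  have hK0 : (0:ℝ) < K := by linarith
  set cK := Real.cos (2 * Real.pi / K) with hcK
  have hθpos : 0 < 2 * Real.pi / K := by positivity
  have hθle : 2 * Real.pi / K ≤ Real.pi / 2 := by
    rw [div_le_div_iff₀ hK0 (by norm_num)]
    nlinarith
  have hcK0 : 0 ≤ cK := Real.cos_nonneg_of_mem_Icc ⟨by linarith, hθle⟩
  have hcK1 : cK < 1 := by
    refine lt_of_le_of_ne (Real.cos_le_one _) fun h => ?_
    have := (Real.cos_eq_one_iff_of_lt_of_lt (x := 2 * Real.pi / K) (by linarith) ?_).mp h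
    · linarith
    · calc 2 * Real.pi / K ≤ Real.pi / 2 := hθle
        _ < 2 * (2 * Real.pi) / 2 := by nlinarith
        _ = 2 * Real.pi := by ring
  set β := 1 - cK with hβdef
  have hβ : 0 < β := by linarith
  have hsβ : 0 < Real.sqrt β := Real.sqrt_pos.mpr hβ
  refine ⟨8 * (K + 1) / Real.sqrt β, by positivity, ?_⟩
  set C := 8 * (K + 1) / Real.sqrt β with hCdef
  have hCβ : C * Real.sqrt β = 8 * (K + 1) := div_mul_cancel₀ _ hsβ.ne'
  have hCpos : 0 < C := by positivity
  intro q p hs hkr ho hdi h1 h2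
  set d1 := q.z3 - q.z1 with hd1def
  set d2 := q.z4 - q.z2 with hd2def
  set m1 := (q.z1 + q.z3) / 2 with hm1def
  set m2 := (q.z2 + q.z4) / 2 with hm2def
  have hd1ne : d1 ≠ 0 := sub_ne_zero.mpr (Ne.symm hs.1.2.1)
  -- step B : (d2 * (p - m1)).im = 0
  have h1' : (d1 * (p - m1)).re = 0 := by
    have he : d1 * (p - m1) = -((q.z1 - q.z3) * (p - (q.z1 + q.z3) / 2)) := by
      rw [hd1def, hm1def]; ring
    rw [he, Complex.neg_re, h1, neg_zero]
  have himz : (d2 * (p - m1)).im = 0 := perp_im_zero hd1ne h1' ho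
  -- target rewrite
  have hC2 : (2 * p - q.z2 - q.z4) * (q.z4 - q.z2)
      = 2 * (d2 * (p - m1)) + 2 * ((m1 - m2) * d2) := by
    rw [hd2def, hm1def, hm2def]; ring
  have him2 : ((2 * p - q.z2 - q.z4) * (q.z4 - q.z2)).im = 2 * ((m1 - m2) * d2).im := by
    rw [hC2, Complex.add_im]
    have e1 : ((2:ℂ) * (d2 * (p - m1))).im = 2 * (d2 * (p - m1)).im := by simp
    have e2 : ((2:ℂ) * ((m1 - m2) * d2)).im = 2 * ((m1 - m2) * d2).im := by simp
    rw [e1, e2, himz]; ring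
  have htarget : |((2 * p - q.z2 - q.z4) * (q.z4 - q.z2)).im|
      ≤ 2 * (‖m1 - m2‖ * ‖d2‖) := by
    rw [him2, abs_mul]
    calc |(2:ℝ)| * |((m1 - m2) * d2).im| ≤ 2 * ‖(m1 - m2) * d2‖ := by
          rw [show |(2:ℝ)| = 2 by norm_num]; gcongr; exact Complex.abs_im_le_norm _
      _ = 2 * (‖m1 - m2‖ * ‖d2‖) := by rw [norm_mul]
  -- edge lengths
  set e0 := dist q.z1 q.z2 with he0
  set e2 := dist q.z3 q.z4 with he2
  have he0nn : 0 ≤ e0 := dist_nonneg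
  have hratio : e2 ≤ K * e0 := hkr.2.2.2.2 2 0
  have hm : ‖m1 - m2‖ ≤ (e0 + e2) / 2 := by
    have he : m1 - m2 = ((q.z1 - q.z2) + (q.z3 - q.z4)) / 2 := by
      rw [hm1def, hm2def]; ring
    rw [he, norm_div, show ‖(2:ℂ)‖ = 2 by simp, he0, he2, Complex.dist_eq, Complex.dist_eq]
    have := norm_add_le (q.z1 - q.z2) (q.z3 - q.z4)
    linarith
  -- angle bound
  have hdiag : β * e0 ^ 2 ≤ ‖d1‖ ^ 2 := by
    set x := q.z1 - q.z2 with hx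
    set y := q.z3 - q.z2 with hy
    have hangle_eq : EuclideanGeometry.angle q.z1 q.z2 q.z3 = InnerProductGeometry.angle x y := rfl
    have hang : 2 * Real.pi / K ≤ InnerProductGeometry.angle x y := hangle_eq ▸ hkr.2.1
    have hcos : Real.cos (InnerProductGeometry.angle x y) ≤ cK :=
      Real.cos_le_cos_of_nonneg_of_le_pi hθpos.le (InnerProductGeometry.angle_le_pi x y) hang
    have hinner : (inner ℝ x y : ℝ) = Real.cos (InnerProductGeometry.angle x y) * (‖x‖ * ‖y‖) :=
      (InnerProductGeometry.cos_angle_mul_norm_mul_norm x y).symm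
    have hnorm : ‖y - x‖ ^ 2 = ‖y‖ ^ 2 - 2 * (inner ℝ y x : ℝ) + ‖x‖ ^ 2 := norm_sub_sq_real y x
    have hyx : y - x = d1 := by rw [hx, hy, hd1def]; ring
    have hcomm : (inner ℝ y x : ℝ) = (inner ℝ x y : ℝ) := real_inner_comm x y
    have he0x : e0 = ‖x‖ := by rw [he0, Complex.dist_eq, hx]
    have hnd1 : ‖y - x‖ = ‖d1‖ := by rw [hyx]
    have hxnn : (0:ℝ) ≤ ‖x‖ := norm_nonneg x
    have hynn : (0:ℝ) ≤ ‖y‖ := norm_nonneg y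
    rw [he0x, hβdef, ← hnd1]
    nlinarith [hnorm, hinner, hcomm, hcK0, hcK1,
      mul_le_mul_of_nonneg_right hcos (mul_nonneg hxnn hynn), sq_nonneg (‖x‖ - ‖y‖)]
  -- area bound
  have hreg : q.region = convexHull ℝ {q.z1, q.z2, q.z3} ∪ convexHull ℝ {q.z1, q.z3, q.z4} := by
    rw [Quad.region, if_pos hdi]
  have hfin : volume q.region < ⊤ := by
    rw [hreg]
    exact measure_union_lt_top (((Set.toFinite _).isCompact_convexHull ℝ).measure_lt_top)
      (((Set.toFinite _).isCompact_convexHull ℝ).measure_lt_top)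
  set A2 : ℝ := ((starRingEnd ℂ) (q.z2 - q.z1) * (q.z3 - q.z1)).im with hA2
  set A4 : ℝ := ((starRingEnd ℂ) (q.z3 - q.z1) * (q.z4 - q.z1)).im with hA4
  have harea2 : |A2| / 4 ≤ q.area := by
    have hle : ENNReal.ofReal (|A2| / 4) ≤ volume q.region :=
      le_trans (tri_vol q.z1 q.z2 q.z3) (measure_mono (hreg ▸ Set.subset_union_left))
    have := ENNReal.toReal_mono hfin.ne hle
    rwa [ENNReal.toReal_ofReal (by positivity)] at this
  have harea4 : |A4| / 4 ≤ q.area := by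
    have hle : ENNReal.ofReal (|A4| / 4) ≤ volume q.region :=
      le_trans (tri_vol q.z1 q.z3 q.z4) (measure_mono (hreg ▸ Set.subset_union_right))
    have := ENNReal.toReal_mono hfin.ne hle
    rwa [ENNReal.toReal_ofReal (by positivity)] at this
  have hkey : A2 + A4 = ((starRingEnd ℂ) d1 * d2).im := by
    rw [hA2, hA4, hd1def, hd2def]
    simp only [Complex.mul_im, Complex.sub_re, Complex.sub_im, Complex.conj_re, Complex.conj_im,
      Complex.neg_im, Complex.neg_re]
    ring
  have himabs : |((starRingEnd ℂ) d1 * d2).im| = ‖d1‖ * ‖d2‖ := by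
    have hre : ((starRingEnd ℂ) d1 * d2).re = 0 := ho
    have hub := Complex.norm_le_abs_re_add_abs_im ((starRingEnd ℂ) d1 * d2)
    have hlb := Complex.abs_im_le_norm ((starRingEnd ℂ) d1 * d2)
    rw [hre, abs_zero, zero_add] at hub
    have : |((starRingEnd ℂ) d1 * d2).im| = ‖(starRingEnd ℂ) d1 * d2‖ :=
      le_antisymm hlb hub
    rw [this, norm_mul, Complex.norm_conj]
  have harea : ‖d1‖ * ‖d2‖ / 8 ≤ q.area := by
    have h1 : ‖d1‖ * ‖d2‖ ≤ |A2| + |A4| := by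
      calc ‖d1‖ * ‖d2‖ = |A2 + A4| := by rw [hkey, himabs]
        _ ≤ |A2| + |A4| := abs_add_le _ _
    linarith
  -- sqrt step
  have hsqe : Real.sqrt β * e0 ≤ ‖d1‖ := by
    have hsq : (Real.sqrt β * e0) ^ 2 ≤ ‖d1‖ ^ 2 := by
      rw [mul_pow, Real.sq_sqrt hβ.le]; exact hdiag
    have := Real.sqrt_le_sqrt hsq
    rwa [Real.sqrt_sq (by positivity), Real.sqrt_sq (by positivity)] at this
  -- final chaining
  have had2 : (0:ℝ) ≤ ‖d2‖ := norm_nonneg _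
  have hK1eq : K + 1 = C * Real.sqrt β / 8 := by rw [hCβ]; ring
  calc |((2 * p - q.z2 - q.z4) * (q.z4 - q.z2)).im|
      ≤ 2 * (‖m1 - m2‖ * ‖d2‖) := htarget
    _ ≤ 2 * ((e0 + e2) / 2 * ‖d2‖) := by gcongr
    _ = (e0 + e2) * ‖d2‖ := by ring
    _ ≤ (e0 + K * e0) * ‖d2‖ := by gcongr
    _ = (K + 1) * e0 * ‖d2‖ := by ring
    _ = C * (Real.sqrt β * e0 * ‖d2‖) / 8 := by rw [hK1eq]; ring
    _ ≤ C * (‖d1‖ * ‖d2‖) / 8 := by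
        have h' := mul_le_mul_of_nonneg_right hsqe had2
        have h'' := mul_le_mul_of_nonneg_left h' hCpos.le
        linarith
    _ = C * (‖d1‖ * ‖d2‖ / 8) := by ring
    _ ≤ C * q.area := by gcongr
end

section
/- Let m ≥ 1, let w : {0,1,…,m} → ℂ satisfy w(i) ≠ w(i−1) for all 1 ≤ i ≤ m, let u : {0,1,…,m} → ℝ, and for each 1 ≤ i ≤ m let v_i ∈ ℂ satisfy Re[conj(v_i)·(w(i)−w(i−1))] = u(i) − u(i−1). Then Σ_{i=1}^{m} |v_i|²·|w(i)−w(i−1)| ≥ (u(m)−u(0))² / ℓ, where ℓ = Σ_{i=1}^{m} |w(i)−w(i−1)| is the Euclidean length of the path. -/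
open Complex Set MeasureTheory Filter
open scoped Classical ENNReal

/-- Semi-energy lower bound along a path: if each `vᵢ` satisfies
`Re[conj(vᵢ)·(w i − w (i−1))] = u i − u (i−1)`, then
`Σ |vᵢ|²·|w i − w (i−1)| ≥ (u m − u 0)² / Σ |w i − w (i−1)|`. -/
theorem semiEnergy_path_lower_bound (m : ℕ) (hm : 1 ≤ m)
    (w : ℕ → ℂ) (u : ℕ → ℝ) (v : ℕ → ℂ)
    (hw : ∀ i, 1 ≤ i → i ≤ m → w i ≠ w (i - 1))
    (hv : ∀ i, 1 ≤ i → i ≤ m →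
      ((starRingEnd ℂ) (v i) * (w i - w (i - 1))).re = u i - u (i - 1)) :
    (u m - u 0) ^ 2 / (∑ i ∈ Finset.Icc 1 m, dist (w i) (w (i - 1))) ≤
      ∑ i ∈ Finset.Icc 1 m, ‖v i‖ ^ 2 * dist (w i) (w (i - 1)) := by
  set d : ℕ → ℝ := fun i => dist (w i) (w (i - 1)) with hd
  have hdpos : ∀ i ∈ Finset.Icc 1 m, 0 ≤ d i := fun i _ => dist_nonneg
  have hLpos : 0 < ∑ i ∈ Finset.Icc 1 m, d i := by
    apply Finset.sum_pos'
    · exact hdpos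
    · exact ⟨1, Finset.mem_Icc.mpr ⟨le_refl 1, hm⟩, dist_pos.mpr (hw 1 le_rfl hm)⟩
  have key : ∀ i ∈ Finset.Icc 1 m, |u i - u (i - 1)| ≤ ‖v i‖ * d i := by
    intro i hi
    rw [Finset.mem_Icc] at hi
    rw [← hv i hi.1 hi.2]
    calc |((starRingEnd ℂ) (v i) * (w i - w (i - 1))).re|
        ≤ ‖(starRingEnd ℂ) (v i) * (w i - w (i - 1))‖ := Complex.abs_re_le_norm _
      _ = ‖v i‖ * d i := by
          rw [norm_mul, Complex.norm_conj, hd]; simp [Complex.dist_eq]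
  have tele : u m - u 0 = ∑ i ∈ Finset.Icc 1 m, (u i - u (i - 1)) := by
    rw [show Finset.Icc 1 m = Finset.map ⟨fun j => j + 1, add_left_injective 1⟩
      (Finset.range m) by
        ext x
        simp only [Finset.mem_map, Finset.mem_range, Finset.mem_Icc,
          Function.Embedding.coeFn_mk]
        constructor
        · rintro ⟨h1, h2⟩; exact ⟨x - 1, by omega, by omega⟩
        · rintro ⟨j, hj, rfl⟩; omega]
    rw [Finset.sum_map]
    simp only [Function.Embedding.coeFn_mk, Nat.add_sub_cancel]
    exact (Finset.sum_range_sub u m).symm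
  have habs : |u m - u 0| ≤ ∑ i ∈ Finset.Icc 1 m, ‖v i‖ * d i := by
    rw [tele]
    exact (Finset.abs_sum_le_sum_abs _ _).trans (Finset.sum_le_sum key)
  rw [div_le_iff₀ hLpos]
  calc (u m - u 0) ^ 2 = |u m - u 0| ^ 2 := (_root_.sq_abs _).symm
    _ ≤ (∑ i ∈ Finset.Icc 1 m, ‖v i‖ * d i) ^ 2 := by
        apply pow_le_pow_left₀ (abs_nonneg _) habs
    _ = (∑ i ∈ Finset.Icc 1 m, (‖v i‖ * Real.sqrt (d i)) * Real.sqrt (d i)) ^ 2 := by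
        congr 1; apply Finset.sum_congr rfl; intro i hi
        rw [mul_assoc, Real.mul_self_sqrt (hdpos i hi)]
    _ ≤ (∑ i ∈ Finset.Icc 1 m, (‖v i‖ * Real.sqrt (d i)) ^ 2) *
        ∑ i ∈ Finset.Icc 1 m, Real.sqrt (d i) ^ 2 :=
        Finset.sum_mul_sq_le_sq_mul_sq _ _ _
    _ = (∑ i ∈ Finset.Icc 1 m, ‖v i‖ ^ 2 * d i) * ∑ i ∈ Finset.Icc 1 m, d i := by
        congr 1
        · apply Finset.sum_congr rfl; intro i hi
          rw [mul_pow, Real.sq_sqrt (hdpos i hi)]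
        · apply Finset.sum_congr rfl; intro i hi
          exact Real.sq_sqrt (hdpos i hi)
end

section
/- There exists an absolute constant C > 0 such that the following holds. Let f = [z1,z2,z3,z4] be a quadrilateral in ℂ (four pairwise distinct points) with orthogonal diagonals, i.e. Re[conj(z3−z1)·(z4−z2)] = 0 with z1 ≠ z3 and z2 ≠ z4. Let g : ℂ → ℝ be twice continuously differentiable on the convex hull of {z1,z2,z3,z4}, and let v ∈ ℂ be the discrete gradient of g on f, i.e. the unique v with Re[conj(v)·(z3−z1)] = g(z3)−g(z1) and Re[conj(v)·(z4−z2)] = g(z4)−g(z2). Then |∇g(z1) − v| ≤ C · diam(f) · max{‖D²g(ζ)‖ : ζ ∈ conv(z1,z2,z3,z4)}, where ∇g(z1) ∈ ℂ is the gradient of g at z1 (identifying ℂ with ℝ²), D²g is the second derivative of g, and diam(f) is the maximal distance between two of the four vertices. -/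
open Complex Set MeasureTheory Filter
open scoped Classical ENNReal

set_option maxHeartbeats 1000000 in
/-- There is an absolute constant `C > 0` such that for any quadrilateral
with orthogonal nondegenerate diagonals and any `g` twice continuously differentiable on the
convex hull of the vertices, the gradient of `g` at `z1` (taken within the hull) and the
discrete gradient `v` of `g` on the face satisfy
`‖∇g(z1) − v‖ ≤ C · diam(f) · max ‖D²g‖`. -/
theorem discrete_gradient_approx :
    ∃ C : ℝ, 0 < C ∧
      ∀ (q : Quad) (g : ℂ → ℝ) (G v : ℂ),
        q.Distinct → q.Orthogonal →
        ContDiffOn ℝ 2 g (convexHull ℝ q.vertexSet) →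
        HasGradientWithinAt g G (convexHull ℝ q.vertexSet) q.z1 →
        q.IsDiscreteGrad g v →
        ∀ M2 : ℝ,
          (∀ ζ ∈ convexHull ℝ q.vertexSet,
            ‖iteratedFDerivWithin ℝ 2 g (convexHull ℝ q.vertexSet) ζ‖ ≤ M2) →
          ‖G - v‖ ≤ C * q.diam * M2 := by
  refine ⟨2, by norm_num, ?_⟩
  intro q g G v hdist horth hg hG hv M2 hM2
  set s := convexHull ℝ q.vertexSet with hsdef
  have hconv : Convex ℝ s := convex_convexHull ℝ _
  have h1v : q.z1 ∈ q.vertexSet := by simp [Quad.vertexSet]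
  have h2v : q.z2 ∈ q.vertexSet := by simp [Quad.vertexSet]
  have h3v : q.z3 ∈ q.vertexSet := by simp [Quad.vertexSet]
  have h4v : q.z4 ∈ q.vertexSet := by simp [Quad.vertexSet]
  have hsub : q.vertexSet ⊆ s := subset_convexHull ℝ _
  have hz1 : q.z1 ∈ s := hsub h1v
  have hz2 : q.z2 ∈ s := hsub h2v
  have hz3 : q.z3 ∈ s := hsub h3v
  have hz4 : q.z4 ∈ s := hsub h4v
  have hd1 : q.z3 - q.z1 ≠ 0 := sub_ne_zero.2 (Ne.symm hdist.2.1)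
  have hd2 : q.z4 - q.z2 ≠ 0 := sub_ne_zero.2 (Ne.symm hdist.2.2.2.2.1)
  set a := (q.z3 - q.z1).re with ha
  set b := (q.z3 - q.z1).im with hb
  set c := (q.z4 - q.z2).re with hc
  set d := (q.z4 - q.z2).im with hd
  have horth' : a * c + b * d = 0 := by
    have h := horth
    simp only [Quad.Orthogonal, Complex.mul_re, Complex.conj_re, Complex.conj_im] at h
    rw [ha, hb, hc, hd]
    linarith
  have hab : 0 < a ^ 2 + b ^ 2 := by
    have h := Complex.normSq_pos.2 hd1
    rw [Complex.normSq_apply] at h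
    rw [ha, hb]; nlinarith
  have hcd : 0 < c ^ 2 + d ^ 2 := by
    have h := Complex.normSq_pos.2 hd2
    rw [Complex.normSq_apply] at h
    rw [hc, hd]; nlinarith
  have hdet : a * d - b * c ≠ 0 := by
    intro h0
    have hiden : (a ^ 2 + b ^ 2) * (c ^ 2 + d ^ 2)
        = (a * d - b * c) ^ 2 + (a * c + b * d) ^ 2 := by ring
    rw [h0, horth'] at hiden
    nlinarith
  have hspan : vectorSpan ℝ q.vertexSet = ⊤ := by
    have hm1 : q.z3 - q.z1 ∈ vectorSpan ℝ q.vertexSet := vsub_mem_vectorSpan ℝ h3v h1v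
    have hm2 : q.z4 - q.z2 ∈ vectorSpan ℝ q.vertexSet := vsub_mem_vectorSpan ℝ h4v h2v
    rw [Submodule.eq_top_iff']
    intro z
    have hz : z = ((z.re * d - z.im * c) / (a * d - b * c)) • (q.z3 - q.z1)
        + ((a * z.im - b * z.re) / (a * d - b * c)) • (q.z4 - q.z2) := by
      apply Complex.ext <;>
        simp only [Complex.add_re, Complex.add_im, Complex.real_smul, Complex.mul_re,
          Complex.mul_im, Complex.ofReal_re, Complex.ofReal_im, ← ha, ← hb, ← hc, ← hd] <;>
        [linear_combination (-z.re) * inv_mul_cancel₀ hdet; linear_combination (-z.im) * inv_mul_cancel₀ hdet]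
    rw [hz]
    exact Submodule.add_mem _ (Submodule.smul_mem _ _ hm1) (Submodule.smul_mem _ _ hm2)
  have hUD : UniqueDiffOn ℝ s := by
    apply uniqueDiffOn_convex hconv
    rw [hconv.interior_nonempty_iff_affineSpan_eq_top, hsdef, affineSpan_convexHull,
      AffineSubspace.affineSpan_eq_top_iff_vectorSpan_eq_top_of_nonempty ℝ ℂ ℂ ⟨q.z1, h1v⟩]
    exact hspan
  have hbdv : Bornology.IsBounded q.vertexSet := by
    show Bornology.IsBounded ({q.z1, q.z2, q.z3, q.z4} : Set ℂ)
    exact ((((Set.finite_singleton q.z4).insert q.z3).insert q.z2).insert q.z1).isBounded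
  have hbds : Bornology.IsBounded s := by
    rw [hsdef, isBounded_convexHull]; exact hbdv
  have hdiam_nn : 0 ≤ q.diam := Metric.diam_nonneg
  have hM2nn : 0 ≤ M2 := le_trans (norm_nonneg _) (hM2 q.z1 hz1)
  have hdist_le : ∀ x ∈ s, ‖x - q.z1‖ ≤ q.diam := by
    intro x hx
    have h := Metric.dist_le_diam_of_mem hbds hx hz1
    rw [hsdef, convexHull_diam] at h
    rwa [← dist_eq_norm]
  have hgd : DifferentiableOn ℝ g s := hg.differentiableOn (by norm_num)
  have hf'd : DifferentiableOn ℝ (fderivWithin ℝ g s) s :=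
    (hg.fderivWithin hUD (by norm_num : (1:WithTop ℕ∞) + 1 ≤ 2)).differentiableOn one_ne_zero
  have hbound2 : ∀ x ∈ s, ‖fderivWithin ℝ (fderivWithin ℝ g s) s x‖ ≤ M2 := by
    intro x hx
    refine ContinuousLinearMap.opNorm_le_bound _ hM2nn fun u => ?_
    refine ContinuousLinearMap.opNorm_le_bound _ (mul_nonneg hM2nn (norm_nonneg u)) fun z => ?_
    have hit := iteratedFDerivWithin_two_apply g hUD hx ![u, z]
    simp only [Matrix.cons_val_zero, Matrix.cons_val_one, Matrix.head_cons] at hit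
    rw [← hit]
    calc ‖iteratedFDerivWithin ℝ 2 g s x ![u, z]‖
        ≤ ‖iteratedFDerivWithin ℝ 2 g s x‖ * ∏ i, ‖![u, z] i‖ :=
          ContinuousMultilinearMap.le_opNorm _ _
      _ ≤ M2 * (‖u‖ * ‖z‖) := by
          rw [Fin.prod_univ_two]
          simp only [Matrix.cons_val_zero, Matrix.cons_val_one, Matrix.head_cons]
          exact mul_le_mul_of_nonneg_right (hM2 x hx)
            (mul_nonneg (norm_nonneg _) (norm_nonneg _))
      _ = M2 * ‖u‖ * ‖z‖ := by ring
  have hLip : ∀ x ∈ s, ‖fderivWithin ℝ g s x - fderivWithin ℝ g s q.z1‖ ≤ M2 * q.diam := by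
    intro x hx
    calc ‖fderivWithin ℝ g s x - fderivWithin ℝ g s q.z1‖
        ≤ M2 * ‖x - q.z1‖ :=
          hconv.norm_image_sub_le_of_norm_fderivWithin_le hf'd hbound2 hz1 hx
      _ ≤ M2 * q.diam := mul_le_mul_of_nonneg_left (hdist_le x hx) hM2nn
  have hφ : fderivWithin ℝ g s q.z1 = (InnerProductSpace.toDual ℝ ℂ) G :=
    (hUD q.z1 hz1).eq (hgd q.z1 hz1).hasFDerivWithinAt hG.hasFDerivWithinAt
  have key : ∀ y ∈ s, ∀ x ∈ s,
      |g y - g x - ((starRingEnd ℂ) G * (y - x)).re| ≤ M2 * q.diam * ‖y - x‖ := by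
    intro y hy x hx
    have h := hconv.norm_image_sub_le_of_norm_fderivWithin_le' hgd hLip hx hy
    rw [hφ] at h
    simpa [InnerProductSpace.toDual_apply_apply, Complex.inner, Real.norm_eq_abs, mul_comm] using h
  set w := G - v with hw
  set K := M2 * q.diam with hK
  have hKnn : 0 ≤ K := mul_nonneg hM2nn hdiam_nn
  have hP1 : |w.re * a + w.im * b| ≤ K * ‖q.z3 - q.z1‖ := by
    have h := key q.z3 hz3 q.z1 hz1
    have e : w.re * a + w.im * b
        = ((starRingEnd ℂ) G * (q.z3 - q.z1)).re - (g q.z3 - g q.z1) := by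
      rw [← hv.1]
      simp only [hw, ha, hb, Complex.mul_re, Complex.conj_re, Complex.conj_im,
        Complex.sub_re, Complex.sub_im]
      ring
    rw [e, abs_sub_comm]
    exact h
  have hP2 : |w.re * c + w.im * d| ≤ K * ‖q.z4 - q.z2‖ := by
    have h := key q.z4 hz4 q.z2 hz2
    have e : w.re * c + w.im * d
        = ((starRingEnd ℂ) G * (q.z4 - q.z2)).re - (g q.z4 - g q.z2) := by
      rw [← hv.2]
      simp only [hw, hc, hd, Complex.mul_re, Complex.conj_re, Complex.conj_im,
        Complex.sub_re, Complex.sub_im]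
      ring
    rw [e, abs_sub_comm]
    exact h
  clear_value s a b c d w K
  have hN1 : ‖q.z3 - q.z1‖ ^ 2 = a ^ 2 + b ^ 2 := by
    rw [Complex.sq_norm, Complex.normSq_apply, ha, hb]; ring
  have hN2 : ‖q.z4 - q.z2‖ ^ 2 = c ^ 2 + d ^ 2 := by
    rw [Complex.sq_norm, Complex.normSq_apply, hc, hd]; ring
  have h1 : (w.re * a + w.im * b) ^ 2 ≤ K ^ 2 * (a ^ 2 + b ^ 2) := by
    have h := pow_le_pow_left₀ (abs_nonneg _) hP1 2
    rwa [_root_.sq_abs, mul_pow, hN1] at h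
  have h2 : (w.re * c + w.im * d) ^ 2 ≤ K ^ 2 * (c ^ 2 + d ^ 2) := by
    have h := pow_le_pow_left₀ (abs_nonneg _) hP2 2
    rwa [_root_.sq_abs, mul_pow, hN2] at h
  have hid : (w.re ^ 2 + w.im ^ 2) * ((a ^ 2 + b ^ 2) * (c ^ 2 + d ^ 2))
      = (w.re * a + w.im * b) ^ 2 * (c ^ 2 + d ^ 2)
        + (w.re * c + w.im * d) ^ 2 * (a ^ 2 + b ^ 2) := by
    linear_combination ((w.re * b - w.im * a) * (w.re * d - w.im * c)
      - (w.re * c + w.im * d) * (w.re * a + w.im * b)) * horth'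
  have hsq : w.re ^ 2 + w.im ^ 2 ≤ 2 * K ^ 2 := by
    have h1' := mul_le_mul_of_nonneg_right h1 hcd.le
    have h2' := mul_le_mul_of_nonneg_right h2 hab.le
    have h3 : (w.re ^ 2 + w.im ^ 2) * ((a ^ 2 + b ^ 2) * (c ^ 2 + d ^ 2))
        ≤ (2 * K ^ 2) * ((a ^ 2 + b ^ 2) * (c ^ 2 + d ^ 2)) := by
      rw [hid]; ring_nf; ring_nf at h1' h2'; linarith
    exact le_of_mul_le_mul_right h3 (mul_pos hab hcd)
  have hWn : ‖w‖ ^ 2 = w.re ^ 2 + w.im ^ 2 := by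
    rw [Complex.sq_norm, Complex.normSq_apply]; ring
  have hgoal : (2 : ℝ) * q.diam * M2 = 2 * K := by rw [hK]; ring
  rw [hgoal]
  nlinarith [hsq, hWn, norm_nonneg w, hKnn, sq_nonneg (‖w‖ - 2 * K)]
end
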